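/- Under the hypotheses of the shooting problem f'' - g(t)f' = h(t)R(f), f(t₀) = -a, f'(t₀) = b with g ≥ 0, h > 0 continuous and R increasing differentiable with R(0)=0, define S⁻ = {b : ∃t>t₀, f'(t;b)<0}, S⁰ = {b : f'(t;b)>0 and f(t;b)≤0 ∀t>t₀}, S⁺ = {b : f'(t;b)>0 ∀t≥t₀ and f(t;b)>0 for some t>t₀}. Then ℝ is the disjoint union of S⁻, S⁰, S⁺. -/

import Mathlib

open Set Filter Real Topology

private lemma aux_right {φ : ℝ → ℝ} {d s : ℝ} (h : HasDerivAt φ d s)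
    (hφ : φ s = 0) (hd : d < 0) : ∃ t > s, φ t < 0 := by
  have hs := hasDerivAt_iff_tendsto_slope.mp h
  have h1 : ∀ᶠ t in 𝓝[>] s, slope φ s t < 0 :=
    (hs.mono_left (nhdsWithin_mono s fun x hx => ne_of_gt hx)).eventually (Iio_mem_nhds hd)
  have h2 : ∀ᶠ t in 𝓝[>] s, s < t := self_mem_nhdsWithin
  obtain ⟨t, h1, h2⟩ := (h1.and h2).exists
  refine ⟨t, h2, ?_⟩
  rw [slope_def_field, hφ, sub_zero] at h1
  by_contra hc
  push_neg at hc
  exact absurd h1 (not_lt.mpr (div_nonneg hc (by linarith)))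

private lemma aux_left {φ : ℝ → ℝ} {d s c : ℝ} (h : HasDerivAt φ d s)
    (hφ : φ s = 0) (hd : 0 < d) (hcs : c < s) : ∃ t, c < t ∧ t < s ∧ φ t < 0 := by
  have hs := hasDerivAt_iff_tendsto_slope.mp h
  have h1 : ∀ᶠ t in 𝓝[<] s, 0 < slope φ s t :=
    (hs.mono_left (nhdsWithin_mono s fun x hx => ne_of_lt hx)).eventually (Ioi_mem_nhds hd)
  have h2 : ∀ᶠ t in 𝓝[<] s, t < s := self_mem_nhdsWithin
  have h3 : ∀ᶠ t in 𝓝[<] s, c < t :=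
    eventually_nhdsWithin_of_eventually_nhds (eventually_gt_nhds hcs)
  obtain ⟨t, h1, h2, h3⟩ := (h1.and (h2.and h3)).exists
  refine ⟨t, h3, h2, ?_⟩
  rw [slope_def_field, hφ, sub_zero] at h1
  by_contra hc
  push_neg at hc
  have : φ t / (t - s) ≤ 0 := div_nonpos_of_nonneg_of_nonpos hc (by linarith)
  linarith

theorem stmt7 (g h R : ℝ → ℝ) (t₀ a : ℝ) (ha : 0 < a)
    (hg : Continuous g) (hgnn : ∀ t, 0 ≤ g t)
    (hh : Continuous h) (hhpos : ∀ t, 0 < h t)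
    (hR : ContDiff ℝ 1 R) (hRmono : StrictMono R) (hR0 : R 0 = 0)
    (f : ℝ → ℝ → ℝ)
    (hf1 : ∀ b t, HasDerivAt (f b) (deriv (f b) t) t)
    (hf2 : ∀ b t, HasDerivAt (deriv (f b)) (deriv (deriv (f b)) t) t)
    (hode : ∀ b, ∀ t ≥ t₀, deriv (deriv (f b)) t - g t * deriv (f b) t = h t * R (f b t))
    (hinit : ∀ b, f b t₀ = -a ∧ deriv (f b) t₀ = b) :
    let Sm := {b : ℝ | ∃ t > t₀, deriv (f b) t < 0}
    let S0 := {b : ℝ | ∀ t > t₀, 0 < deriv (f b) t ∧ f b t ≤ 0}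
    let Sp := {b : ℝ | (∀ t ≥ t₀, 0 < deriv (f b) t) ∧ ∃ t > t₀, 0 < f b t}
    Sm ∪ S0 ∪ Sp = Set.univ ∧ Disjoint Sm S0 ∧ Disjoint Sm Sp ∧ Disjoint S0 Sp := by
  intro Sm S0 Sp
  refine ⟨?_, ?_, ?_, ?_⟩
  · rw [Set.eq_univ_iff_forall]
    intro b
    by_cases hmem : b ∈ Sm
    · exact Or.inl (Or.inl hmem)
    have hm : ∀ t > t₀, 0 ≤ deriv (f b) t := by
      intro t ht
      by_contra hc
      exact hmem ⟨t, ht, not_le.mp hc⟩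
    have hFc : Continuous (f b) :=
      continuous_iff_continuousAt.mpr fun t => (hf1 b t).continuousAt
    have hF'c : Continuous (deriv (f b)) :=
      continuous_iff_continuousAt.mpr fun t => (hf2 b t).continuousAt
    have hm' : ∀ t ≥ t₀, 0 ≤ deriv (f b) t := by
      intro t ht
      rcases eq_or_lt_of_le ht with rfl | ht'
      · refine ge_of_tendsto ((hF'c.tendsto _).mono_left (nhdsWithin_le_nhds (s := Set.Ioi t₀))) ?_
        filter_upwards [self_mem_nhdsWithin] with x hx using hm x hx
      · exact hm t ht'
    have hmono : MonotoneOn (f b) (Ici t₀) := by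
      refine monotoneOn_of_deriv_nonneg (convex_Ici t₀) hFc.continuousOn
        (fun x _ => (hf1 b x).differentiableAt.differentiableWithinAt) ?_
      intro x hx
      rw [interior_Ici] at hx
      exact hm x hx
    have hode' : ∀ t ≥ t₀, deriv (deriv (f b)) t
        = g t * deriv (f b) t + h t * R (f b t) := by
      intro t ht; linarith [hode b t ht]
    have key : ∀ s ≥ t₀, 0 < deriv (f b) s := by
      intro s hs
      rcases (hm' s hs).lt_or_eq with h0 | h0
      · exact h0
      exfalso
      rcases lt_trichotomy (f b s) 0 with hfs | hfs | hfs
      · -- f b s < 0 : second derivative negative, f' dips below 0 to the right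
        have hRneg : R (f b s) < 0 := by rw [← hR0]; exact hRmono hfs
        have hd : deriv (deriv (f b)) s < 0 := by
          rw [hode' s hs, ← h0]
          nlinarith [hhpos s]
        obtain ⟨t, hts, htneg⟩ := aux_right (hf2 b s) h0.symm hd
        exact absurd htneg (not_lt.mpr (hm' t (le_trans hs hts.le)))
      · -- f b s = 0 and f' s = 0 : backward uniqueness via Gronwall
        have hst : t₀ < s := by
          rcases eq_or_lt_of_le hs with rfl | h'
          · rw [(hinit b).1] at hfs; linarith
          · exact h'
        have hrange : ∀ t ∈ Icc t₀ s, f b t ∈ Icc (-a) 0 := by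
          intro t ht
          constructor
          · rw [← (hinit b).1]
            exact hmono self_mem_Ici ht.1 ht.1
          · rw [← hfs]
            exact hmono ht.1 hs ht.2
        -- Lipschitz-type bound for R on [-a, 0]
        have hR' : Continuous (deriv R) := (hR.iterate_deriv' 0 1).continuous
        obtain ⟨L, hL⟩ := isCompact_Icc.exists_bound_of_continuousOn
          (s := Icc (-a) (0:ℝ)) hR'.continuousOn
        have hL0 : 0 ≤ L := le_trans (norm_nonneg _) (hL 0 ⟨by linarith, le_refl 0⟩)
        have hRlin : ∀ x ∈ Icc (-a) (0:ℝ), |R x| ≤ L * |x| := by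
          intro x hx
          have := Convex.norm_image_sub_le_of_norm_deriv_le
            (f := R) (s := Icc (-a) (0:ℝ))
            (fun y _ => (hR.differentiable one_ne_zero).differentiableAt) hL
            (convex_Icc _ _) ⟨by linarith, le_refl 0⟩ hx
          simpa [hR0, Real.norm_eq_abs] using this
        obtain ⟨Cg, hCg⟩ := isCompact_Icc.exists_bound_of_continuousOn
          (s := Icc t₀ s) hg.continuousOn
        obtain ⟨Ch, hCh⟩ := isCompact_Icc.exists_bound_of_continuousOn
          (s := Icc t₀ s) hh.continuousOn
        have hCg0 : 0 ≤ Cg := le_trans (norm_nonneg _) (hCg t₀ ⟨le_refl _, hs⟩)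
        have hCh0 : 0 ≤ Ch := le_trans (norm_nonneg _) (hCh t₀ ⟨le_refl _, hs⟩)
        set K : ℝ := max 1 (Cg + Ch * L) with hK
        set V : ℝ → ℝ × ℝ := fun τ => (f b (s - τ), deriv (f b) (s - τ)) with hV
        have hVd : ∀ τ, HasDerivAt V
            (-deriv (f b) (s - τ), -deriv (deriv (f b)) (s - τ)) τ := by
          intro τ
          have hu : HasDerivAt (fun τ : ℝ => s - τ) (-1) τ := by
            simpa using (hasDerivAt_id τ).const_sub s
          have h1 : HasDerivAt (fun τ : ℝ => f b (s - τ))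
              (deriv (f b) (s - τ) * (-1)) τ := (hf1 b (s - τ)).comp τ hu
          have h2 : HasDerivAt (fun τ : ℝ => deriv (f b) (s - τ))
              (deriv (deriv (f b)) (s - τ) * (-1)) τ := (hf2 b (s - τ)).comp τ hu
          simpa [mul_neg_one] using h1.prodMk h2
        have hVcont : ContinuousOn V (Icc 0 (s - t₀)) :=
          ((hFc.comp (continuous_const.sub continuous_id)).prodMk
            (hF'c.comp (continuous_const.sub continuous_id))).continuousOn
        have hbound : ∀ τ ∈ Ico 0 (s - t₀),
            ‖(-deriv (f b) (s - τ), -deriv (deriv (f b)) (s - τ))‖ ≤ K * ‖V τ‖ + 0 := by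
          intro τ hτ
          have ht1 : t₀ < s - τ := by cases hτ; linarith
          have ht2 : s - τ ≤ s := by cases hτ; linarith
          have htmem : s - τ ∈ Icc t₀ s := ⟨ht1.le, ht2⟩
          set t := s - τ
          have hFt : f b t ∈ Icc (-a) (0:ℝ) := hrange t htmem
          have hgb : |g t| ≤ Cg := by simpa [Real.norm_eq_abs] using hCg t htmem
          have hhb : |h t| ≤ Ch := by simpa [Real.norm_eq_abs] using hCh t htmem
          have hRb : |R (f b t)| ≤ L * |f b t| := hRlin _ hFt
          have hM : ‖V τ‖ = max |f b t| |deriv (f b) t| := by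
            simp [hV, Prod.norm_def, Real.norm_eq_abs]; rfl
          have hM1 : |f b t| ≤ ‖V τ‖ := hM ▸ le_max_left _ _
          have hM2 : |deriv (f b) t| ≤ ‖V τ‖ := hM ▸ le_max_right _ _
          have hMnn : 0 ≤ ‖V τ‖ := norm_nonneg _
          have hf'' : |deriv (deriv (f b)) t| ≤ (Cg + Ch * L) * ‖V τ‖ := by
            rw [hode' t ht1.le]
            calc |g t * deriv (f b) t + h t * R (f b t)|
                ≤ |g t * deriv (f b) t| + |h t * R (f b t)| := abs_add_le _ _
              _ = |g t| * |deriv (f b) t| + |h t| * |R (f b t)| := by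
                  rw [abs_mul, abs_mul]
              _ ≤ Cg * ‖V τ‖ + Ch * (L * ‖V τ‖) := by
                  have h1 : |g t| * |deriv (f b) t| ≤ Cg * ‖V τ‖ :=
                    mul_le_mul hgb hM2 (abs_nonneg _) hCg0
                  have h2 : |h t| * |R (f b t)| ≤ Ch * (L * ‖V τ‖) := by
                    refine mul_le_mul hhb ?_ (abs_nonneg _) hCh0
                    exact le_trans hRb (mul_le_mul_of_nonneg_left hM1 hL0)
                  linarith
              _ = (Cg + Ch * L) * ‖V τ‖ := by ring
          rw [add_zero, Prod.norm_def]
          simp only [norm_neg, Real.norm_eq_abs]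
          refine max_le ?_ ?_
          · exact le_trans hM2 (le_mul_of_one_le_left hMnn (le_max_left _ _))
          · exact le_trans hf'' (mul_le_mul_of_nonneg_right (le_max_right _ _) hMnn)
        have hgron := norm_le_gronwallBound_of_norm_deriv_right_le hVcont
          (fun τ _ => (hVd τ).hasDerivWithinAt)
          (δ := 0) (by simp [hV, hfs, ← h0]) hbound
        have hfin := hgron (s - t₀) ⟨by linarith, le_refl _⟩
        rw [gronwallBound_ε0_δ0] at hfin
        have : ‖(V (s - t₀)).1‖ ≤ ‖V (s - t₀)‖ := norm_fst_le _
        have hV1 : (V (s - t₀)).1 = -a := by simp [hV, (hinit b).1]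
        rw [hV1, Real.norm_eq_abs, abs_neg, abs_of_pos ha] at this
        linarith
      · -- f b s > 0 : second derivative positive, f' dips below 0 to the left
        have hst : t₀ < s := by
          rcases eq_or_lt_of_le hs with rfl | h'
          · rw [(hinit b).1] at hfs; linarith
          · exact h'
        have hRpos : 0 < R (f b s) := by rw [← hR0]; exact hRmono hfs
        have hd : 0 < deriv (deriv (f b)) s := by
          rw [hode' s hs, ← h0]
          nlinarith [hhpos s]
        obtain ⟨t, hct, _, htneg⟩ := aux_left (hf2 b s) h0.symm hd hst
        exact absurd htneg (not_lt.mpr (hm t hct))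
    by_cases hp : ∃ t > t₀, 0 < f b t
    · exact Or.inr ⟨key, hp⟩
    · push_neg at hp
      exact Or.inl (Or.inr fun t ht => ⟨key t ht.le, hp t ht⟩)
  · rw [Set.disjoint_left]
    rintro b ⟨t, ht, hneg⟩ hb'
    linarith [(hb' t ht).1]
  · rw [Set.disjoint_left]
    rintro b ⟨t, ht, hneg⟩ hb'
    linarith [hb'.1 t ht.le]
  · rw [Set.disjoint_left]
    rintro b hb ⟨_, t, ht, hpos⟩
    linarith [(hb t ht).2]
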